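/- Every element φ of ∏_p C(ℤ_p, ℤ_p) (a family of continuous functions φ_p : ℤ_p → ℤ_p, one for each prime p) can be uniquely written as a uniformly convergent series φ = Σ_{n≥0} c_n · binom(x, n), where c_n ∈ Ẑ = ∏_p ℤ_p, c_n → 0 in Ẑ, and the binomial polynomial binom(x,n) = x(x−1)⋯(x−n+1)/n! is evaluated componentwise. Moreover the coefficients satisfy c_k = φ(k) − Σ_{h=0}^{k−1} c_h · binom(k, h), where φ(k) = (φ_p(k))_p. -/

import Mathlib

open Polynomial Filter

instance (p : Nat.Primes) : Fact (p : ℕ).Prime := ⟨p.2⟩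

/-- `Ẑ = ∏_p ℤ_p` with the product topology. -/
abbrev Zhat : Type := ∀ p : Nat.Primes, ℤ_[(p : ℕ)]

/-- The binomial polynomial `binom(x, n) = x(x−1)⋯(x−n+1)/n! ∈ ℚ[x]`. -/
noncomputable def binomPoly (n : ℕ) : Polynomial ℚ := ((Nat.factorial n : ℚ))⁻¹ • descPochhammer ℚ n

/-- `c : ℕ → Ẑ` is a family of Mahler coefficients for `φ = (φ_p)_p`: it tends to `0` in `Ẑ`
and, for each prime `p`, the series `Σ_n c_{n,p} binom(x, n)` converges uniformly on `ℤ_p`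
to `φ_p`. -/
def IsMahlerExpansion (φ : ∀ p : Nat.Primes, C(ℤ_[(p : ℕ)], ℤ_[(p : ℕ)]))
    (c : ℕ → Zhat) : Prop :=
  Tendsto c atTop (nhds 0) ∧
    ∀ p : Nat.Primes,
      TendstoUniformly
        (fun N (x : ℤ_[(p : ℕ)]) => ∑ n ∈ Finset.range N,
          (c n p : ℚ_[(p : ℕ)]) * (Polynomial.aeval ((x : ℚ_[(p : ℕ)]))) (binomPoly n))
        (fun x => ((φ p x : ℤ_[(p : ℕ)]) : ℚ_[(p : ℕ)])) atTop

section aux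

lemma fwdDiff_iter_hom {M G H : Type*} [AddCommMonoid M] [AddCommGroup G] [AddCommGroup H]
    (g : G →+ H) (h : M) (f : M → G) (n : ℕ) (x : M) :
    (fwdDiff h)^[n] (fun y => g (f y)) x = g ((fwdDiff h)^[n] f x) := by
  induction n generalizing f x with
  | zero => rfl
  | succ n ih =>
    rw [Function.iterate_succ_apply, Function.iterate_succ_apply]
    have : fwdDiff h (fun y => g (f y)) = fun y => g (fwdDiff h f y) := by
      funext y; simp [fwdDiff, map_sub]
    rw [this, ih]

variable {p : ℕ} [hp : Fact p.Prime]

instance : IsBoundedSMul ℤ_[p] ℚ_[p] :=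
  IsBoundedSMul.of_norm_smul_le fun r x => by
    rw [Algebra.smul_def, norm_mul, PadicInt.algebraMap_apply, PadicInt.norm_def]

lemma binomPoly_aeval_natCast (k n : ℕ) :
    (Polynomial.aeval ((k : ℚ_[p]))) (binomPoly n) = (k.choose n : ℚ_[p]) := by
  rw [binomPoly, map_smul, aeval_def, eval₂_eq_eval_map, descPochhammer_map,
    descPochhammer_eval_eq_descFactorial, Nat.descFactorial_eq_factorial_mul_choose,
    Rat.smul_def]
  push_cast
  rw [← mul_assoc, inv_mul_cancel₀ (by exact_mod_cast n.factorial_ne_zero), one_mul]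

lemma binomPoly_aeval_eq_mahler (n : ℕ) :
    (fun x : ℤ_[p] => (Polynomial.aeval ((x : ℚ_[p]))) (binomPoly n)) = fun x => ((mahler n x : ℤ_[p]) : ℚ_[p]) := by
  have hc : Continuous fun x : ℤ_[p] => (Polynomial.aeval ((x : ℚ_[p]))) (binomPoly n) := by
    fun_prop
  refine PadicInt.denseRange_natCast.equalizer hc (by fun_prop) (funext fun k => ?_)
  simp only [Function.comp_apply, mahler_natCast_eq]
  rw [PadicInt.coe_natCast, PadicInt.coe_natCast, binomPoly_aeval_natCast]

end aux

/-- **adelic Mahler theorem.** Every `φ ∈ ∏_p C(ℤ_p, ℤ_p)` has a unique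
expansion `φ = Σ_n c_n binom(x, n)` with `c_n ∈ Ẑ`, `c_n → 0`, the series converging
uniformly in each component; moreover `c_k = φ(k) − Σ_{h<k} c_h binom(k, h)`. -/
theorem adelic_mahler (φ : ∀ p : Nat.Primes, C(ℤ_[(p : ℕ)], ℤ_[(p : ℕ)])) :
    (∃! c : ℕ → Zhat, IsMahlerExpansion φ c)
      ∧ ∀ c : ℕ → Zhat, IsMahlerExpansion φ c →
          ∀ (k : ℕ) (p : Nat.Primes),
            (c k p : ℚ_[(p : ℕ)])
              = ((φ p (k : ℤ_[(p : ℕ)]) : ℤ_[(p : ℕ)]) : ℚ_[(p : ℕ)])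
                - ∑ h ∈ Finset.range k,
                    (c h p : ℚ_[(p : ℕ)]) * (Nat.choose k h : ℚ_[(p : ℕ)]) := by
  -- the recurrence, valid for any expansion
  have hrec : ∀ c : ℕ → Zhat, IsMahlerExpansion φ c →
      ∀ (k : ℕ) (p : Nat.Primes),
        (c k p : ℚ_[(p : ℕ)])
          = ((φ p (k : ℤ_[(p : ℕ)]) : ℤ_[(p : ℕ)]) : ℚ_[(p : ℕ)])
            - ∑ h ∈ Finset.range k,
                (c h p : ℚ_[(p : ℕ)]) * (Nat.choose k h : ℚ_[(p : ℕ)]) := by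
    rintro c ⟨-, h2⟩ k p
    have hpt := (h2 p).tendsto_at ((k : ℤ_[(p : ℕ)]))
    have hterm : ∀ n, ((c n p : ℚ_[(p : ℕ)])
        * (Polynomial.aeval (((k : ℤ_[(p : ℕ)]) : ℚ_[(p : ℕ)]))) (binomPoly n))
        = (c n p : ℚ_[(p : ℕ)]) * (k.choose n : ℚ_[(p : ℕ)]) := fun n => by
      rw [PadicInt.coe_natCast, binomPoly_aeval_natCast]
    simp only [hterm] at hpt
    have hconst : Tendsto
        (fun N => ∑ n ∈ Finset.range N, (c n p : ℚ_[(p : ℕ)]) * (k.choose n : ℚ_[(p : ℕ)]))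
        atTop (nhds (∑ n ∈ Finset.range (k + 1),
          (c n p : ℚ_[(p : ℕ)]) * (k.choose n : ℚ_[(p : ℕ)]))) := by
      apply tendsto_atTop_of_eventually_const (i₀ := k + 1)
      intro N hN
      refine (Finset.sum_subset (Finset.range_subset_range.mpr hN) fun n _ hn => ?_).symm
      rw [Nat.choose_eq_zero_of_lt (by simp only [Finset.mem_range, not_lt] at hn; omega),
        Nat.cast_zero, mul_zero]
    have hS := tendsto_nhds_unique hconst hpt
    rw [Finset.sum_range_succ, Nat.choose_self, Nat.cast_one, mul_one] at hS
    exact eq_sub_of_add_eq' hS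
  -- the canonical coefficients
  set c₀ : ℕ → Zhat := fun n p => (fwdDiff 1)^[n] (φ p) 0 with hc₀
  have hexp : IsMahlerExpansion φ c₀ := by
    constructor
    · rw [tendsto_pi_nhds]
      intro p
      have h1 := PadicInt.fwdDiff_tendsto_zero
        (⟨fun x => ((φ p x : ℤ_[(p : ℕ)]) : ℚ_[(p : ℕ)]), by fun_prop⟩ : C(ℤ_[(p : ℕ)], ℚ_[(p : ℕ)]))
      rw [tendsto_zero_iff_norm_tendsto_zero] at h1
      simp only [ContinuousMap.coe_mk] at h1
      have key : ∀ n, (fwdDiff 1)^[n]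
          (fun x : ℤ_[(p : ℕ)] => ((φ p x : ℤ_[(p : ℕ)]) : ℚ_[(p : ℕ)])) 0
          = ((c₀ n p : ℚ_[(p : ℕ)])) := fun n =>
        fwdDiff_iter_hom (PadicInt.Coe.ringHom (p := (p : ℕ))).toAddMonoidHom 1 (⇑(φ p)) n 0
      have h0 : (0 : Zhat) p = 0 := rfl
      rw [h0, tendsto_zero_iff_norm_tendsto_zero]
      have h2 : ∀ n, ‖(fwdDiff 1)^[n]
          (fun x : ℤ_[(p : ℕ)] => ((φ p x : ℤ_[(p : ℕ)]) : ℚ_[(p : ℕ)])) 0‖ = ‖c₀ n p‖ := by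
        intro n
        rw [key n, PadicInt.norm_def]
      simpa only [h2] using h1
    · intro p
      set fc : C(ℤ_[(p : ℕ)], ℚ_[(p : ℕ)]) :=
        ⟨fun x => ((φ p x : ℤ_[(p : ℕ)]) : ℚ_[(p : ℕ)]), by fun_prop⟩ with hfc
      have hs := (PadicInt.hasSum_mahler fc).tendsto_sum_nat
      rw [ContinuousMap.tendsto_iff_tendstoUniformly] at hs
      have heq : (fun N (x : ℤ_[(p : ℕ)]) => ∑ n ∈ Finset.range N,
            (c₀ n p : ℚ_[(p : ℕ)]) * (Polynomial.aeval ((x : ℚ_[(p : ℕ)]))) (binomPoly n))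
          = fun N x => (∑ n ∈ Finset.range N,
              PadicInt.mahlerTerm ((fwdDiff 1)^[n] fc 0) n) x := by
        funext N x
        rw [ContinuousMap.coe_sum, Finset.sum_apply]
        refine Finset.sum_congr rfl fun n _ => ?_
        have h3 : (fwdDiff 1)^[n] (⇑fc) 0 = ((c₀ n p : ℤ_[(p : ℕ)]) : ℚ_[(p : ℕ)]) := by
          rw [hfc]
          exact fwdDiff_iter_hom (PadicInt.Coe.ringHom (p := (p : ℕ))).toAddMonoidHom 1 (φ p) n 0
        have h4 := congrFun (binomPoly_aeval_eq_mahler (p := (p : ℕ)) n) x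
        rw [PadicInt.mahlerTerm_apply, h3, h4, Algebra.smul_def, PadicInt.algebraMap_apply, mul_comm]
      rw [heq]
      exact hs
  refine ⟨⟨c₀, hexp, fun c hc => ?_⟩, hrec⟩
  suffices h : ∀ k, ∀ p, c k p = c₀ k p by funext k p; exact h k p
  intro k
  induction k using Nat.strong_induction_on with
  | _ k ih =>
    intro p
    have h1 := hrec c hc k p
    have h2 := hrec c₀ hexp k p
    have h3 : (c k p : ℚ_[(p : ℕ)]) = (c₀ k p : ℚ_[(p : ℕ)]) := by
      rw [h1, h2, Finset.sum_congr rfl fun h hh => by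
        rw [ih h (Finset.mem_range.mp hh) p]]
    exact Subtype.coe_injective h3
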